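/- Let n, α, k ∈ ℕ, let U = {1,…,n}, and let F_1,…,F_α ⊆ U with |F_t| ≥ 2 for every t ∈ {1,…,α}. Let (G, col) be the α-edge-colored graph associated with this Hitting Set instance. Then there exists a set S ⊆ U with |S| ≤ k and S ∩ F_t ≠ ∅ for every t ∈ {1,…,α} if and only if (G, col) has a simultaneous feedback edge set of size at most k. -/

import Mathlib

def consecPair {n : ℕ} (F : Finset (Fin n)) (i j : Fin n) : Prop :=
  (i ∈ F ∧ j ∈ F ∧ i < j ∧ ∀ l ∈ F, ¬(i < l ∧ l < j)) ∨
  (i ∈ F ∧ j ∈ F ∧ (∀ l ∈ F, l ≤ i) ∧ (∀ l ∈ F, j ≤ l))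

namespace HS

variable {n : ℕ}

lemma consec_mem_left {F : Finset (Fin n)} {i j : Fin n} (h : consecPair F i j) : i ∈ F := by
  rcases h with ⟨h, -⟩ | ⟨h, -⟩ <;> exact h

lemma consec_mem_right {F : Finset (Fin n)} {i j : Fin n} (h : consecPair F i j) : j ∈ F := by
  rcases h with ⟨-, h, -⟩ | ⟨-, h, -⟩ <;> exact h

lemma consec_right_unique {F : Finset (Fin n)} {i j j' : Fin n}
    (h : consecPair F i j) (h' : consecPair F i j') : j = j' := by
  rcases h with ⟨hi, hj, hij, hbet⟩ | ⟨hi, hj, hmax, hmin⟩ <;>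
    rcases h' with ⟨hi', hj', hij', hbet'⟩ | ⟨hi', hj', hmax', hmin'⟩
  · by_contra hne
    rcases lt_or_gt_of_ne hne with h1 | h1
    · exact hbet' j hj ⟨hij, h1⟩
    · exact hbet j' hj' ⟨hij', h1⟩
  · exact absurd (hmax' j hj) (not_le.mpr hij)
  · exact absurd (hmax j' hj') (not_le.mpr hij')
  · exact le_antisymm (hmin j' hj') (hmin' j hj)

lemma exists_consec_left {F : Finset (Fin n)} (hne : F.Nonempty) {j : Fin n} (hj : j ∈ F) :
    ∃ i, consecPair F i j := by
  set M : Finset (Fin n) := F.filter (fun y => y < j) with hM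
  have hmem : ∀ y, y ∈ M ↔ y ∈ F ∧ y < j := fun y => by rw [hM]; exact Finset.mem_filter
  by_cases hlt : M.Nonempty
  · have hm := (hmem _).mp (M.max'_mem hlt)
    refine ⟨M.max' hlt, Or.inl ⟨hm.1, hj, hm.2, ?_⟩⟩
    rintro l hl ⟨h1, h2'⟩
    exact absurd (M.le_max' l ((hmem l).mpr ⟨hl, h2'⟩)) (not_le.mpr h1)
  · refine ⟨F.max' hne, Or.inr ⟨Finset.max'_mem _ _, hj, fun l hl => Finset.le_max' _ l hl,
      fun l hl => ?_⟩⟩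
    by_contra hcon
    exact hlt ⟨l, (hmem l).mpr ⟨hl, not_le.mp hcon⟩⟩

/-- position of `l` in the cyclic order of `Fin n` started at `x`. -/
def kk (x l : Fin n) : ℕ := if x.val ≤ l.val then l.val - x.val else l.val + n - x.val

lemma kk_self (x : Fin n) : kk x x = 0 := by simp [kk]

lemma kk_eq_zero_iff {x l : Fin n} : kk x l = 0 ↔ l = x := by
  have hl := l.isLt; have hx := x.isLt
  rw [Fin.ext_iff]; unfold kk; split_ifs <;> omega

lemma kk_inj {x a b : Fin n} (h : kk x a = kk x b) : a = b := by
  have ha := a.isLt; have hb := b.isLt; have hx := x.isLt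
  unfold kk at h
  rw [Fin.ext_iff]
  split_ifs at h <;> omega

lemma kk_step {F : Finset (Fin n)} {x i j : Fin n} (hx : x ∈ F)
    (hc : consecPair F i j) (hj : j ≠ x) :
    kk x i < kk x j ∧ ∀ l ∈ F, ¬(kk x i < kk x l ∧ kk x l < kk x j) := by
  have hin := i.isLt; have hjn := j.isLt; have hxn := x.isLt
  have hjx : j.val ≠ x.val := fun h => hj (Fin.ext h)
  rcases hc with ⟨hi, hjF, hij, hbet⟩ | ⟨hi, hjF, hmax, hmin⟩
  · have hij' : i.val < j.val := hij
    have hxb : ¬(i.val < x.val ∧ x.val < j.val) := fun h => hbet x hx ⟨h.1, h.2⟩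
    constructor
    · unfold kk; split_ifs <;> omega
    · rintro l hl ⟨hA, hB⟩
      have hln := l.isLt
      have hbl : ¬(i.val < l.val ∧ l.val < j.val) := fun h => hbet l hl ⟨h.1, h.2⟩
      unfold kk at hA hB; split_ifs at hA hB <;> omega
  · have h1 : x.val ≤ i.val := hmax x hx
    have h2 : j.val ≤ x.val := hmin x hx
    constructor
    · unfold kk; split_ifs <;> omega
    · rintro l hl ⟨hA, hB⟩
      have hln := l.isLt
      have hl1 : l.val ≤ i.val := hmax l hl
      have hl2 : j.val ≤ l.val := hmin l hl
      unfold kk at hA hB; split_ifs at hA hB <;> omega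

lemma kk_top {F : Finset (Fin n)} {x i : Fin n} (h2 : 2 ≤ F.card) (hx : x ∈ F)
    (hc : consecPair F i x) : ∀ l ∈ F, kk x l ≤ kk x i := by
  have hin := i.isLt; have hxn := x.isLt
  rcases hc with ⟨hi, -, hix, hbet⟩ | ⟨hi, -, hmax, hmin⟩
  · have hix' : i.val < x.val := hix
    intro l hl
    have hln := l.isLt
    have hbl : ¬(i.val < l.val ∧ l.val < x.val) := fun h => hbet l hl ⟨h.1, h.2⟩
    unfold kk; split_ifs <;> omega
  · obtain ⟨y, hy, hyx⟩ := Finset.exists_mem_ne (s := F) (by omega) x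
    have hy1 : x.val ≤ y.val := hmin y hy
    have hy2 : y.val ≤ i.val := hmax y hy
    have hy3 : y.val ≠ x.val := fun h => hyx (Fin.ext h)
    intro l hl
    have hln := l.isLt
    have hl1 : l.val ≤ i.val := hmax l hl
    have hl2 : x.val ≤ l.val := hmin l hl
    unfold kk; split_ifs <;> omega

/-- distance from `x` to `i` along the cycle of `F`. -/
def dd (F : Finset (Fin n)) (x i : Fin n) : ℕ :=
  (F.filter fun l => 0 < kk x l ∧ kk x l ≤ kk x i).card

lemma dd_self (F : Finset (Fin n)) (x : Fin n) : dd F x x = 0 := by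
  rw [dd, Finset.card_eq_zero, Finset.filter_eq_empty_iff]
  intro l _
  rw [kk_self]
  omega

lemma dd_pos {F : Finset (Fin n)} {x i : Fin n} (hi : i ∈ F) (hix : i ≠ x) :
    0 < dd F x i := by
  rw [dd, Finset.card_pos]
  refine ⟨i, Finset.mem_filter.mpr ⟨hi, ?_, le_rfl⟩⟩
  have := kk_eq_zero_iff (x := x) (l := i)
  omega

lemma dd_lt {F : Finset (Fin n)} {x i : Fin n} (hx : x ∈ F) :
    dd F x i < F.card := by
  have hsub : (F.filter fun l => 0 < kk x l ∧ kk x l ≤ kk x i) ⊆ F.erase x := by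
    intro l hl
    rw [Finset.mem_filter] at hl
    refine Finset.mem_erase.mpr ⟨fun h => ?_, hl.1⟩
    rw [h, kk_self] at hl
    omega
  calc dd F x i ≤ (F.erase x).card := Finset.card_le_card hsub
    _ < F.card := by
        rw [Finset.card_erase_of_mem hx]
        have : 0 < F.card := Finset.card_pos.mpr ⟨x, hx⟩
        omega

lemma dd_inj {F : Finset (Fin n)} {x i j : Fin n} (hi : i ∈ F) (hj : j ∈ F)
    (h : dd F x i = dd F x j) : i = j := by
  rcases lt_trichotomy (kk x i) (kk x j) with hlt | heq | hlt
  · exfalso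
    have hss : (F.filter fun l => 0 < kk x l ∧ kk x l ≤ kk x i) ⊂
        (F.filter fun l => 0 < kk x l ∧ kk x l ≤ kk x j) := by
      refine ⟨Finset.filter_subset_filter _ (le_refl F) |>.trans ?_, ?_⟩
      · exact Finset.monotone_filter_right F (fun l _ hl => ⟨hl.1, hl.2.trans hlt.le⟩)
      · intro hcon
        have hjmem : j ∈ F.filter fun l => 0 < kk x l ∧ kk x l ≤ kk x j :=
          Finset.mem_filter.mpr ⟨hj, by omega, le_rfl⟩
        have := Finset.mem_filter.mp (hcon hjmem)
        omega
    have := Finset.card_lt_card hss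
    rw [dd, dd] at h
    omega
  · exact kk_inj heq
  · exfalso
    have hss : (F.filter fun l => 0 < kk x l ∧ kk x l ≤ kk x j) ⊂
        (F.filter fun l => 0 < kk x l ∧ kk x l ≤ kk x i) := by
      refine ⟨Finset.filter_subset_filter _ (le_refl F) |>.trans ?_, ?_⟩
      · exact Finset.monotone_filter_right F (fun l _ hl => ⟨hl.1, hl.2.trans hlt.le⟩)
      · intro hcon
        have himem : i ∈ F.filter fun l => 0 < kk x l ∧ kk x l ≤ kk x i :=
          Finset.mem_filter.mpr ⟨hi, by omega, le_rfl⟩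
        have := Finset.mem_filter.mp (hcon himem)
        omega
    have := Finset.card_lt_card hss
    rw [dd, dd] at h
    omega

lemma dd_succ {F : Finset (Fin n)} {x i j : Fin n} (hx : x ∈ F)
    (hc : consecPair F i j) (hj : j ≠ x) : dd F x j = dd F x i + 1 := by
  obtain ⟨hlt, hbet⟩ := kk_step hx hc hj
  have hjF : j ∈ F := consec_mem_right hc
  have hins : (F.filter fun l => 0 < kk x l ∧ kk x l ≤ kk x j) =
      insert j (F.filter fun l => 0 < kk x l ∧ kk x l ≤ kk x i) := by
    ext l
    simp only [Finset.mem_filter, Finset.mem_insert]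
    constructor
    · rintro ⟨hl, hpos, hle⟩
      by_cases hli : kk x l ≤ kk x i
      · exact Or.inr ⟨hl, hpos, hli⟩
      · left
        have := hbet l hl
        exact kk_inj (x := x) (by omega)
    · rintro (rfl | ⟨hl, hpos, hle⟩)
      · exact ⟨hjF, by omega, le_rfl⟩
      · exact ⟨hl, hpos, hle.trans hlt.le⟩
  rw [dd, dd, hins, Finset.card_insert_of_notMem]
  intro hcon
  have := (Finset.mem_filter.mp hcon).2
  omega

lemma dd_last {F : Finset (Fin n)} {x i : Fin n} (h2 : 2 ≤ F.card) (hx : x ∈ F)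
    (hc : consecPair F i x) : dd F x i + 1 = F.card := by
  have hkt := kk_top h2 hx hc
  have : (F.filter fun l => 0 < kk x l ∧ kk x l ≤ kk x i) = F.erase x := by
    ext l
    simp only [Finset.mem_filter, Finset.mem_erase]
    constructor
    · rintro ⟨hl, hpos, -⟩
      refine ⟨fun h => ?_, hl⟩
      rw [h, kk_self] at hpos; omega
    · rintro ⟨hlx, hl⟩
      have : kk x l ≠ 0 := fun h => hlx (kk_eq_zero_iff.mp h)
      exact ⟨hl, by omega, hkt l hl⟩
  rw [dd, this, Finset.card_erase_of_mem hx]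
  omega

end HS
def hsGraph (n α : ℕ) (F : Fin α → Finset (Fin n)) :
    SimpleGraph ((Fin n × Bool) ⊕ (Fin n × Fin n × Fin α)) :=
  SimpleGraph.fromRel fun a b =>
    (∃ i : Fin n, a = Sum.inl (i, false) ∧ b = Sum.inl (i, true)) ∨
    (∃ (i j : Fin n) (t : Fin α), consecPair (F t) i j ∧
        a = Sum.inl (i, true) ∧ b = Sum.inr (i, j, t)) ∨
    (∃ (i j : Fin n) (t : Fin α), consecPair (F t) i j ∧
        a = Sum.inr (i, j, t) ∧ b = Sum.inl (j, false))

/-- The color-`t` graph `G_t` of the associated `α`-edge-colored graph: the edge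
`{v i, w i}` has color set `{t : i ∈ F t}`, and the edges `{w i, s_{i,j,t}}`,
`{s_{i,j,t}, v j}` have color set `{t}`. -/
def hsColorGraph (n α : ℕ) (F : Fin α → Finset (Fin n)) (t : Fin α) :
    SimpleGraph ((Fin n × Bool) ⊕ (Fin n × Fin n × Fin α)) :=
  SimpleGraph.fromRel fun a b =>
    (∃ i : Fin n, i ∈ F t ∧ a = Sum.inl (i, false) ∧ b = Sum.inl (i, true)) ∨
    (∃ i j : Fin n, consecPair (F t) i j ∧
        a = Sum.inl (i, true) ∧ b = Sum.inr (i, j, t)) ∨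
    (∃ i j : Fin n, consecPair (F t) i j ∧
        a = Sum.inr (i, j, t) ∧ b = Sum.inl (j, false))


section Part2

open SimpleGraph

lemma HS.acyclic_of_level {V : Type*} (G : SimpleGraph V) (f : V → ℤ)
    (hinj : ∀ u v, (∃ a, G.Adj u a) → (∃ b, G.Adj v b) → f u = f v → u = v)
    (hstep : ∀ u v, G.Adj u v → f v = f u + 1 ∨ f u = f v + 1) : G.IsAcyclic := by
  have key : ∀ u v : V, G.Adj u v → f v = f u + 1 →
      ¬(G \ SimpleGraph.fromEdgeSet {s(u, v)}).Reachable u v := by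
    rintro u v huv hf ⟨p⟩
    have mono : ∀ {a b : V} (_ : (G \ SimpleGraph.fromEdgeSet {s(u, v)}).Walk a b),
        f a ≤ f u → f b ≤ f u := by
      intro a b q
      induction q with
      | nil => exact id
      | @cons a c b h q ih =>
        intro ha
        apply ih
        rw [SimpleGraph.sdiff_adj] at h
        obtain ⟨hG, hnot⟩ := h
        have hne : s(a, c) ≠ s(u, v) := by
          intro hh
          exact hnot ((SimpleGraph.fromEdgeSet_adj _).mpr ⟨by rw [hh]; rfl, hG.ne⟩)
        rcases hstep _ _ hG with h1 | h1
        · by_contra hc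
          push_neg at hc
          have hfa : f a = f u := by omega
          have hfc : f c = f v := by omega
          have ha' : a = u := hinj _ _ ⟨c, hG⟩ ⟨v, huv⟩ hfa
          have hc' : c = v := hinj _ _ ⟨a, hG.symm⟩ ⟨u, huv.symm⟩ hfc
          rw [ha', hc'] at hne
          exact hne rfl
        · omega
    have := mono p le_rfl
    omega
  rw [SimpleGraph.isAcyclic_iff_forall_adj_isBridge]
  intro u v huv
  rw [SimpleGraph.isBridge_iff]
  rcases hstep _ _ huv with h1 | h1
  · exact key u v huv h1
  · intro hr
    have hk := key v u huv.symm h1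
    rw [Sym2.eq_swap] at hk
    exact hk hr.symm

variable {n α : ℕ} {F : Fin α → Finset (Fin n)} {t : Fin α}

/-- vertex type -/
abbrev HSV (n α : ℕ) := (Fin n × Bool) ⊕ (Fin n × Fin n × Fin α)

lemma HS.shape {u b : HSV n α} (h : (hsColorGraph n α F t).Adj u b) :
    (∃ i, i ∈ F t ∧ u = Sum.inl (i, false)) ∨ (∃ i, i ∈ F t ∧ u = Sum.inl (i, true)) ∨
    (∃ i j, consecPair (F t) i j ∧ u = Sum.inr (i, j, t)) := by
  rw [hsColorGraph, SimpleGraph.fromRel_adj] at h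
  rcases h.2 with (⟨i, hi, rfl, -⟩ | ⟨i, j, hc, rfl, -⟩ | ⟨i, j, hc, rfl, -⟩) |
    (⟨i, hi, -, rfl⟩ | ⟨i, j, hc, -, rfl⟩ | ⟨i, j, hc, -, rfl⟩)
  · exact Or.inl ⟨i, hi, rfl⟩
  · exact Or.inr (Or.inl ⟨i, HS.consec_mem_left hc, rfl⟩)
  · exact Or.inr (Or.inr ⟨i, j, hc, rfl⟩)
  · exact Or.inr (Or.inl ⟨i, hi, rfl⟩)
  · exact Or.inr (Or.inr ⟨i, j, hc, rfl⟩)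
  · exact Or.inl ⟨j, HS.consec_mem_right hc, rfl⟩

/-- the level function -/
def HS.levelF (F : Finset (Fin n)) (x : Fin n) : HSV n α → ℤ
  | Sum.inl (i, false) => if i = x then 3 * (F.card : ℤ) - 1 else 3 * (HS.dd F x i : ℤ) - 1
  | Sum.inl (i, true) => 3 * (HS.dd F x i : ℤ)
  | Sum.inr (i, _, _) => 3 * (HS.dd F x i : ℤ) + 1

lemma HS.hs_acyclic (n α : ℕ) (F : Fin α → Finset (Fin n)) (t : Fin α)
    (h2 : 2 ≤ (F t).card) {x : Fin n} (hx : x ∈ F t)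
    (E : Set (Sym2 (HSV n α)))
    (hE : s(Sum.inl (x, false), Sum.inl (x, true)) ∈ E) :
    ((hsColorGraph n α F t).deleteEdges E).IsAcyclic := by
  apply HS.acyclic_of_level _ (HS.levelF (F t) x)
  · rintro u v ⟨a, hua⟩ ⟨b, hvb⟩ hf
    have hu := HS.shape ((SimpleGraph.deleteEdges_adj.mp hua).1)
    have hv := HS.shape ((SimpleGraph.deleteEdges_adj.mp hvb).1)
    clear hua hvb
    rcases hu with ⟨i, hi, rfl⟩ | ⟨i, hi, rfl⟩ | ⟨i, j, hc, rfl⟩ <;>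
      rcases hv with ⟨i', hi', rfl⟩ | ⟨i', hi', rfl⟩ | ⟨i', j', hc', rfl⟩ <;>
      simp only [HS.levelF] at hf
    · -- v_i vs v_i'
      have hdi : HS.dd (F t) x i < (F t).card := HS.dd_lt hx
      have hdi' : HS.dd (F t) x i' < (F t).card := HS.dd_lt hx
      split_ifs at hf with hix hix' hix'
      · rw [hix, hix']
      · exfalso; omega
      · exfalso; omega
      · have : HS.dd (F t) x i = HS.dd (F t) x i' := by omega
        rw [HS.dd_inj hi hi' this]
    · exfalso; split_ifs at hf <;> omega
    · exfalso; split_ifs at hf <;> omega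
    · exfalso; split_ifs at hf <;> omega
    · have : HS.dd (F t) x i = HS.dd (F t) x i' := by omega
      rw [HS.dd_inj hi hi' this]
    · exfalso; omega
    · exfalso; split_ifs at hf <;> omega
    · exfalso; omega
    · have hdd : HS.dd (F t) x i = HS.dd (F t) x i' := by omega
      have heq : i = i' :=
        HS.dd_inj (HS.consec_mem_left hc) (HS.consec_mem_left hc') hdd
      subst heq
      rw [HS.consec_right_unique hc hc']
  · intro u v huv
    rw [SimpleGraph.deleteEdges_adj] at huv
    obtain ⟨hadj, hnot⟩ := huv
    rw [hsColorGraph, SimpleGraph.fromRel_adj] at hadj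
    have hcard1 : 1 ≤ (F t).card := by omega
    rcases hadj.2 with (⟨i, hi, rfl, rfl⟩ | ⟨i, j, hc, rfl, rfl⟩ | ⟨i, j, hc, rfl, rfl⟩) |
      (⟨i, hi, rfl, rfl⟩ | ⟨i, j, hc, rfl, rfl⟩ | ⟨i, j, hc, rfl, rfl⟩)
    · by_cases hix : i = x
      · subst hix; exact absurd hE hnot
      · simp only [HS.levelF, if_neg hix]
        left; ring
    · exact Or.inl (by simp only [HS.levelF])
    · by_cases hjx : j = x
      · subst hjx
        have hlast := HS.dd_last h2 hx hc
        simp only [HS.levelF]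
        split_ifs with h
        · omega
        · exact absurd trivial h
      · have hsucc := HS.dd_succ hx hc hjx
        simp only [HS.levelF, if_neg hjx]
        omega
    · by_cases hix : i = x
      · subst hix
        exact absurd (by rwa [Sym2.eq_swap] at hE) hnot
      · simp only [HS.levelF, if_neg hix]
        right; ring
    · exact Or.inr (by simp only [HS.levelF])
    · by_cases hjx : j = x
      · subst hjx
        have hlast := HS.dd_last h2 hx hc
        simp only [HS.levelF]
        split_ifs with h
        · omega
        · exact absurd trivial h
      · have hsucc := HS.dd_succ hx hc hjx
        simp only [HS.levelF, if_neg hjx]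
        omega

end Part2
section Part3

open SimpleGraph

variable {n α : ℕ} {F : Fin α → Finset (Fin n)} {t : Fin α}

lemma HS.hsC_adj_vw {i : Fin n} (hi : i ∈ F t) :
    (hsColorGraph n α F t).Adj (Sum.inl (i, false)) (Sum.inl (i, true)) := by
  rw [hsColorGraph, SimpleGraph.fromRel_adj]
  exact ⟨by simp, Or.inl (Or.inl ⟨i, hi, rfl, rfl⟩)⟩

lemma HS.hsC_adj_ws {i j : Fin n} (hc : consecPair (F t) i j) :
    (hsColorGraph n α F t).Adj (Sum.inl (i, true)) (Sum.inr (i, j, t)) := by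
  rw [hsColorGraph, SimpleGraph.fromRel_adj]
  exact ⟨by simp, Or.inl (Or.inr (Or.inl ⟨i, j, hc, rfl, rfl⟩))⟩

lemma HS.hsC_adj_sv {i j : Fin n} (hc : consecPair (F t) i j) :
    (hsColorGraph n α F t).Adj (Sum.inr (i, j, t)) (Sum.inl (j, false)) := by
  rw [hsColorGraph, SimpleGraph.fromRel_adj]
  exact ⟨by simp, Or.inl (Or.inr (Or.inr ⟨i, j, hc, rfl, rfl⟩))⟩

lemma HS.lift_adj {a b : HSV n α} {x : Fin n} (h : (hsColorGraph n α F t).Adj a b)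
    (hne : s(a, b) ≠ s((Sum.inl (x, false) : HSV n α), Sum.inl (x, true))) :
    ((hsColorGraph n α F t) \
      SimpleGraph.fromEdgeSet {s((Sum.inl (x, false) : HSV n α), Sum.inl (x, true))}).Adj a b := by
  rw [SimpleGraph.sdiff_adj]
  refine ⟨h, fun hcon => ?_⟩
  rw [SimpleGraph.fromEdgeSet_adj] at hcon
  exact hne (by simpa using hcon.1)

lemma HS.hs_not_acyclic (n α : ℕ) (F : Fin α → Finset (Fin n)) (t : Fin α)
    (h2 : 2 ≤ (F t).card) : ¬(hsColorGraph n α F t).IsAcyclic := by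
  obtain ⟨x, hx⟩ : (F t).Nonempty := Finset.card_pos.mp (by omega)
  have hFne : (F t).Nonempty := ⟨x, hx⟩
  intro hac
  have hadj := HS.hsC_adj_vw (t := t) hx
  have hbr := (SimpleGraph.isAcyclic_iff_forall_adj_isBridge.mp hac) hadj
  rw [SimpleGraph.isBridge_iff] at hbr
  apply hbr
  set G' := (hsColorGraph n α F t) \
    SimpleGraph.fromEdgeSet {s((Sum.inl (x, false) : HSV n α), Sum.inl (x, true))} with hG'
  have mainreach : ∀ m : ℕ, ∀ i, i ∈ F t → HS.dd (F t) x i ≤ m →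
      G'.Reachable (Sum.inl (x, true)) (Sum.inl (i, true)) := by
    intro m
    induction m with
    | zero =>
      intro i hi hd
      have hix : i = x := by
        by_contra hne
        have := HS.dd_pos hi hne
        omega
      rw [hix]
    | succ m ih =>
      intro i hi hd
      by_cases hix : i = x
      · rw [hix]
      · obtain ⟨p, hc⟩ := HS.exists_consec_left hFne hi
        have hstep := HS.dd_succ hx hc hix
        have hp : p ∈ F t := HS.consec_mem_left hc
        have h1 := ih p hp (by omega)
        have a1 : G'.Adj (Sum.inl (p, true)) (Sum.inr (p, i, t)) :=
          HS.lift_adj (HS.hsC_adj_ws hc) (by simp [Sym2.eq_iff])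
        have a2 : G'.Adj (Sum.inr (p, i, t)) (Sum.inl (i, false)) :=
          HS.lift_adj (HS.hsC_adj_sv hc) (by simp [Sym2.eq_iff])
        have a3 : G'.Adj (Sum.inl (i, false)) (Sum.inl (i, true)) :=
          HS.lift_adj (HS.hsC_adj_vw hi) (by simp [Sym2.eq_iff, hix])
        exact h1.trans (a1.reachable.trans (a2.reachable.trans a3.reachable))
  obtain ⟨p, hc⟩ := HS.exists_consec_left hFne hx
  have hp : p ∈ F t := HS.consec_mem_left hc
  have h1 := mainreach (HS.dd (F t) x p) p hp le_rfl
  have a1 : G'.Adj (Sum.inl (p, true)) (Sum.inr (p, x, t)) :=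
    HS.lift_adj (HS.hsC_adj_ws hc) (by simp [Sym2.eq_iff])
  have a2 : G'.Adj (Sum.inr (p, x, t)) (Sum.inl (x, false)) :=
    HS.lift_adj (HS.hsC_adj_sv hc) (by simp [Sym2.eq_iff])
  exact (h1.trans (a1.reachable.trans a2.reachable)).symm

def HS.pickLabel : HSV n α → HSV n α → Fin n
  | Sum.inl p, Sum.inl q => min p.1 q.1
  | Sum.inl p, Sum.inr q => if p.2 then q.1 else q.2.1
  | Sum.inr q, Sum.inl p => if p.2 then q.1 else q.2.1
  | Sum.inr q, Sum.inr r => min q.1 r.1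

lemma HS.pickLabel_comm : ∀ a b : HSV n α, HS.pickLabel a b = HS.pickLabel b a := by
  rintro (p | q) (p' | q') <;> simp [HS.pickLabel, min_comm]

def HS.eLabel : Sym2 (HSV n α) → Fin n := Sym2.lift ⟨HS.pickLabel, HS.pickLabel_comm⟩

end Part3

theorem stmt_9 (n α k : ℕ) (F : Fin α → Finset (Fin n))
    (hF : ∀ t, 2 ≤ (F t).card) :
    (∃ S : Finset (Fin n), S.card ≤ k ∧ ∀ t : Fin α, ∃ x ∈ S, x ∈ F t) ↔
    (∃ S : Finset (Sym2 ((Fin n × Bool) ⊕ (Fin n × Fin n × Fin α))),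
      S.card ≤ k ∧
      (S : Set (Sym2 ((Fin n × Bool) ⊕ (Fin n × Fin n × Fin α)))) ⊆
        (hsGraph n α F).edgeSet ∧
      ∀ t : Fin α,
        ((hsColorGraph n α F t).deleteEdges
          (S : Set (Sym2 ((Fin n × Bool) ⊕ (Fin n × Fin n × Fin α))))).IsAcyclic) := by
  constructor
  · rintro ⟨S₀, hcard, hhit⟩
    refine ⟨S₀.image (fun x => s(Sum.inl (x, false), Sum.inl (x, true))),
      le_trans Finset.card_image_le hcard, ?_, ?_⟩
    · intro e he
      rw [Finset.mem_coe, Finset.mem_image] at he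
      obtain ⟨x, hxS, rfl⟩ := he
      rw [SimpleGraph.mem_edgeSet, hsGraph, SimpleGraph.fromRel_adj]
      exact ⟨by simp, Or.inl (Or.inl ⟨x, rfl, rfl⟩)⟩
    · intro t
      obtain ⟨x, hxS, hxF⟩ := hhit t
      apply HS.hs_acyclic n α F t (hF t) hxF
      rw [Finset.mem_coe, Finset.mem_image]
      exact ⟨x, hxS, rfl⟩
  · rintro ⟨S, hcard, hsub, hac⟩
    refine ⟨S.image HS.eLabel, le_trans Finset.card_image_le hcard, fun t => ?_⟩
    have key : ∃ e ∈ S, e ∈ (hsColorGraph n α F t).edgeSet := by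
      by_contra hno
      push_neg at hno
      apply HS.hs_not_acyclic n α F t (hF t)
      have hdel : (hsColorGraph n α F t).deleteEdges
          (S : Set (Sym2 ((Fin n × Bool) ⊕ (Fin n × Fin n × Fin α)))) =
          hsColorGraph n α F t := by
        rw [SimpleGraph.deleteEdges_eq_self, Set.disjoint_right]
        intro e heS
        exact hno e (Finset.mem_coe.mp heS)
      rw [← hdel]
      exact hac t
    obtain ⟨e, heS, heE⟩ := key
    refine ⟨HS.eLabel e, Finset.mem_image_of_mem _ heS, ?_⟩
    clear heS
    revert heE
    induction e using Sym2.ind with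
    | _ a b =>
      intro heE
      rw [SimpleGraph.mem_edgeSet, hsColorGraph, SimpleGraph.fromRel_adj] at heE
      rcases heE.2 with (⟨i, hi, rfl, rfl⟩ | ⟨i, j, hc, rfl, rfl⟩ | ⟨i, j, hc, rfl, rfl⟩) |
        (⟨i, hi, rfl, rfl⟩ | ⟨i, j, hc, rfl, rfl⟩ | ⟨i, j, hc, rfl, rfl⟩)
      · simpa [HS.eLabel, Sym2.lift_mk, HS.pickLabel] using hi
      · simpa [HS.eLabel, Sym2.lift_mk, HS.pickLabel] using HS.consec_mem_left hc
      · simpa [HS.eLabel, Sym2.lift_mk, HS.pickLabel] using HS.consec_mem_right hc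
      · simpa [HS.eLabel, Sym2.lift_mk, HS.pickLabel] using hi
      · simpa [HS.eLabel, Sym2.lift_mk, HS.pickLabel] using HS.consec_mem_left hc
      · simpa [HS.eLabel, Sym2.lift_mk, HS.pickLabel] using HS.consec_mem_right hc
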